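/- For fixed l and α > 1 with α·l never an integer, the overlap probabilities from a sudden box expansion sum to one: ∑_{k=1}^∞ b_{kl}² = 1, where b_{kl} = 2lα^{3/2}(−1)^l sin(kπ/α)/(π(k² − α²l²)). -/

import Mathlib

open Real MeasureTheory intervalIntegral Set

noncomputable section SuddenExpansionAux

/-- Clamped sine wavefunction: equals `sin (lπx)` on `[-1,1]` and `0` outside. -/
private def clampSin (l : ℕ) : ℝ → ℂ :=
  fun x => ((Real.sin (l * π * (max (-1) (min 1 x))) : ℝ) : ℂ)

private lemma clampSin_cont (l : ℕ) : Continuous (clampSin l) := by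
  unfold clampSin; fun_prop

private lemma clampSin_eq_of_mem {l : ℕ} {x : ℝ} (h1 : -1 ≤ x) (h2 : x ≤ 1) :
    clampSin l x = ((Real.sin (l * π * x) : ℝ) : ℂ) := by
  unfold clampSin
  rw [min_eq_right h2, max_eq_right h1]

private lemma clampSin_eq_zero_left {l : ℕ} {x : ℝ} (hx : x ≤ -1) : clampSin l x = 0 := by
  unfold clampSin
  rw [min_eq_right (by linarith : x ≤ 1), max_eq_left hx,
    show (l : ℝ) * π * (-1) = -(l * π) by ring, Real.sin_neg, Real.sin_nat_mul_pi]
  simp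

private lemma clampSin_eq_zero_right {l : ℕ} {x : ℝ} (hx : 1 ≤ x) : clampSin l x = 0 := by
  unfold clampSin
  rw [min_eq_left hx, max_eq_right (by norm_num : (-1:ℝ) ≤ 1), mul_one, Real.sin_nat_mul_pi]
  simp

private lemma key_int (b c : ℝ) (h1 : b - c ≠ 0) (h2 : b + c ≠ 0) :
    ∫ x in (-1:ℝ)..1, Complex.exp ((-(c*x) : ℝ) * Complex.I) * ((Real.sin (b*x) : ℝ) : ℂ)
      = Complex.I * ((Real.sin (b+c) / (b+c) - Real.sin (b-c) / (b-c) : ℝ) : ℂ) := by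
  have hbc1 : ((b - c : ℝ) : ℂ) ≠ 0 := Complex.ofReal_ne_zero.mpr h1
  have hbc2 : ((b + c : ℝ) : ℂ) ≠ 0 := Complex.ofReal_ne_zero.mpr h2
  have e1 : (((b - c : ℝ) : ℂ) * Complex.I) ≠ 0 := mul_ne_zero hbc1 Complex.I_ne_zero
  have e2 : ((-((b + c : ℝ) : ℂ)) * Complex.I) ≠ 0 :=
    mul_ne_zero (neg_ne_zero.mpr hbc2) Complex.I_ne_zero
  have step : ∀ x : ℝ, Complex.exp ((-(c*x) : ℝ) * Complex.I) * ((Real.sin (b*x) : ℝ) : ℂ)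
      = (Complex.exp ((-((b + c : ℝ) : ℂ) * Complex.I) * x)
          - Complex.exp ((((b - c : ℝ) : ℂ) * Complex.I) * x)) * Complex.I / 2 := by
    intro x
    rw [Complex.ofReal_sin, Complex.sin,
      show (-((b+c:ℝ):ℂ) * Complex.I) * x = ((-(c*x):ℝ) * Complex.I) + (-(↑(b*x)) * Complex.I) by
        push_cast; ring,
      show ((((b-c):ℝ):ℂ) * Complex.I) * x = ((-(c*x):ℝ) * Complex.I) + ((↑(b*x)) * Complex.I) by
        push_cast; ring,
      Complex.exp_add, Complex.exp_add]
    ring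
  rw [intervalIntegral.integral_congr (fun x _ => step x)]
  have i1 : IntervalIntegrable (fun x : ℝ => Complex.exp ((-((b + c : ℝ) : ℂ) * Complex.I) * x))
      volume (-1) 1 := (Complex.continuous_exp.comp (by fun_prop)).intervalIntegrable _ _
  have i2 : IntervalIntegrable (fun x : ℝ => Complex.exp ((((b - c : ℝ) : ℂ) * Complex.I) * x))
      volume (-1) 1 := (Complex.continuous_exp.comp (by fun_prop)).intervalIntegrable _ _
  simp_rw [mul_div_assoc]
  rw [intervalIntegral.integral_mul_const, intervalIntegral.integral_sub i1 i2,
      integral_exp_mul_complex e2, integral_exp_mul_complex e1]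
  have E : ∀ t : ℝ, Complex.exp ((t : ℂ) * Complex.I)
      = (Real.cos t : ℂ) + (Real.sin t : ℂ) * Complex.I := by
    intro t
    rw [Complex.exp_mul_I, Complex.ofReal_cos, Complex.ofReal_sin]
  have sub : ∀ θ : ℝ, Complex.exp (((-θ : ℝ) : ℂ) * Complex.I) - Complex.exp ((θ : ℝ) * Complex.I)
      = (-2 * Real.sin θ : ℝ) * Complex.I := by
    intro θ
    rw [E, E, Real.cos_neg, Real.sin_neg]
    push_cast; ring
  rw [show (-((b + c : ℝ) : ℂ) * Complex.I) * (1:ℝ) = ((-(b+c) : ℝ) : ℂ) * Complex.I by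
        push_cast; ring,
      show (-((b + c : ℝ) : ℂ) * Complex.I) * ((-1:ℝ):ℂ) = (((b+c) : ℝ) : ℂ) * Complex.I by
        push_cast; ring,
      show ((((b - c) : ℝ) : ℂ) * Complex.I) * (1:ℝ) = (((b-c) : ℝ) : ℂ) * Complex.I by
        push_cast; ring,
      show ((((b - c) : ℝ) : ℂ) * Complex.I) * ((-1:ℝ):ℂ) = ((-(b-c) : ℝ) : ℂ) * Complex.I by
        push_cast; ring,
      sub (b+c),
      show Complex.exp ((((b-c):ℝ):ℂ) * Complex.I) - Complex.exp (((-(b-c):ℝ):ℂ) * Complex.I)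
        = -((( -2 * Real.sin (b-c) : ℝ) : ℂ) * Complex.I) by rw [← sub (b-c)]; ring]
  rw [show ((( -2 * Real.sin (b+c) : ℝ) : ℂ) * Complex.I) / (-((b + c : ℝ) : ℂ) * Complex.I)
        = ((-2 * Real.sin (b+c) : ℝ) : ℂ) / (-((b + c : ℝ) : ℂ)) from
      mul_div_mul_right _ _ Complex.I_ne_zero,
      show (-((( -2 * Real.sin (b-c) : ℝ) : ℂ) * Complex.I)) / (((b - c : ℝ) : ℂ) * Complex.I)
        = ((2 * Real.sin (b-c) : ℝ) : ℂ) / (((b - c : ℝ) : ℂ)) by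
        rw [show (-((( -2 * Real.sin (b-c) : ℝ) : ℂ) * Complex.I))
            = ((2 * Real.sin (b-c) : ℝ) : ℂ) * Complex.I by push_cast; ring]
        exact mul_div_mul_right _ _ Complex.I_ne_zero]
  rw [show ((-2*Real.sin (b+c) : ℝ):ℂ) / (-((b + c : ℝ) : ℂ))
        = ((2*Real.sin (b+c) : ℝ):ℂ) / ((b + c : ℝ) : ℂ) by
        rw [show ((-2*Real.sin (b+c) : ℝ):ℂ) = -((2*Real.sin (b+c) : ℝ):ℂ) by push_cast; ring,
          neg_div_neg_eq]]
  have hb1 : ((b:ℂ) - c) ≠ 0 := by push_cast at hbc1 ⊢; exact hbc1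
  have hb2 : ((b:ℂ) + c) ≠ 0 := by push_cast at hbc2 ⊢; exact hbc2
  push_cast
  field_simp

section Main

variable {l : ℕ} {alpha : ℝ}

private lemma alpha_mul_ne (hl : 1 ≤ l) (halpha : 1 < alpha) (hirr : Irrational alpha)
    (n : ℤ) : (l : ℝ) * alpha ≠ (n : ℝ) :=
  (hirr.natCast_mul (by omega : l ≠ 0)).ne_int n

private lemma denom_ne (hl : 1 ≤ l) (halpha : 1 < alpha) (hirr : Irrational alpha)
    (n : ℤ) : alpha ^ 2 * (l:ℝ) ^ 2 - (n:ℝ) ^ 2 ≠ 0 := by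
  have h1 := alpha_mul_ne hl halpha hirr n
  have h2 := alpha_mul_ne hl halpha hirr (-n)
  push_cast at h2
  intro h
  have : ((l:ℝ) * alpha - n) * ((l:ℝ) * alpha + n) = 0 := by ring_nf; ring_nf at h; linarith
  rcases mul_eq_zero.mp this with h' | h'
  · exact h1 (by linarith)
  · exact h2 (by linarith)

/-- The Fourier coefficient of the lifted clamped sine. -/
private lemma coeff_formula (hl : 1 ≤ l) (halpha : 1 < alpha) (hirr : Irrational alpha)
    (n : ℤ) :
    haveI : Fact (0 < 2 * alpha) := ⟨by linarith⟩
    fourierCoeff (AddCircle.liftIco (2*alpha) (-alpha) (clampSin l)) n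
      = Complex.I * ((((-1:ℝ)^l * (l * alpha * Real.sin (n * π / alpha))
          / (π * (alpha^2 * l^2 - n^2))) : ℝ) : ℂ) := by
  haveI : Fact (0 < 2 * alpha) := ⟨by linarith⟩
  have hα : (0:ℝ) < alpha := by linarith
  have hπ := Real.pi_pos
  set b : ℝ := (l : ℝ) * π with hb
  set c : ℝ := (n : ℝ) * π / alpha with hc
  have hbc1 : b - c ≠ 0 := by
    intro h
    apply alpha_mul_ne hl halpha hirr n
    rw [hb, hc] at h
    field_simp at h
    nlinarith [h]
  have hbc2 : b + c ≠ 0 := by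
    intro h
    apply alpha_mul_ne hl halpha hirr (-n)
    rw [hb, hc] at h
    push_cast
    field_simp at h
    nlinarith [h]
  rw [fourierCoeff_eq_intervalIntegral _ n (-alpha)]
  have hIeq : (∫ x in (-alpha)..(-alpha + 2*alpha),
        (fourier (-n) (x : AddCircle (2*alpha)) : ℂ) • AddCircle.liftIco (2*alpha) (-alpha) (clampSin l) x)
      = ∫ x in (-alpha)..alpha,
        Complex.exp ((-(c * x) : ℝ) * Complex.I) * clampSin l x := by
    rw [show -alpha + 2*alpha = alpha by ring]
    refine intervalIntegral.integral_congr_ae ?_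
    have hne : ∀ᵐ x : ℝ, x ≠ alpha := by
      refine (MeasureTheory.ae_iff).mpr ?_
      simpa using Real.volume_singleton
    filter_upwards [hne] with x hx hmem
    rw [uIoc_of_le (by linarith : -alpha ≤ alpha)] at hmem
    have hxmem : x ∈ Ico (-alpha) (-alpha + 2*alpha) := by
      constructor
      · exact le_of_lt hmem.1
      · rw [show -alpha + 2*alpha = alpha by ring]
        exact lt_of_le_of_ne hmem.2 hx
    rw [AddCircle.liftIco_coe_apply hxmem, smul_eq_mul]
    congr 1
    rw [fourier_coe_apply]
    congr 1
    rw [hc]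
    push_cast
    field_simp
  rw [hIeq]
  have icont : Continuous (fun x : ℝ => Complex.exp ((-(c * x) : ℝ) * Complex.I) * clampSin l x) := by
    apply Continuous.mul ?_ (clampSin_cont l)
    apply Complex.continuous_exp.comp
    fun_prop
  have split1 : (∫ x in (-alpha)..(-1:ℝ),
        Complex.exp ((-(c * x) : ℝ) * Complex.I) * clampSin l x) = 0 := by
    rw [intervalIntegral.integral_congr (g := fun _ => (0:ℂ)) ?_, intervalIntegral.integral_zero]
    intro x hx
    rw [uIcc_of_le (by linarith : -alpha ≤ -1)] at hx
    show Complex.exp ((-(c * x) : ℝ) * Complex.I) * clampSin l x = 0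
    rw [clampSin_eq_zero_left hx.2, mul_zero]
  have split2 : (∫ x in (1:ℝ)..alpha,
        Complex.exp ((-(c * x) : ℝ) * Complex.I) * clampSin l x) = 0 := by
    rw [intervalIntegral.integral_congr (g := fun _ => (0:ℂ)) ?_, intervalIntegral.integral_zero]
    intro x hx
    rw [uIcc_of_le (by linarith : (1:ℝ) ≤ alpha)] at hx
    show Complex.exp ((-(c * x) : ℝ) * Complex.I) * clampSin l x = 0
    rw [clampSin_eq_zero_right hx.1, mul_zero]
  have hmid : (∫ x in (-1:ℝ)..1,
        Complex.exp ((-(c * x) : ℝ) * Complex.I) * clampSin l x)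
      = ∫ x in (-1:ℝ)..1, Complex.exp ((-(c*x) : ℝ) * Complex.I) * ((Real.sin (b*x) : ℝ) : ℂ) := by
    refine intervalIntegral.integral_congr fun x hx => ?_
    rw [uIcc_of_le (by norm_num : (-1:ℝ) ≤ 1)] at hx
    rw [clampSin_eq_of_mem hx.1 hx.2, hb]
  have hsplit : (∫ x in (-alpha)..alpha,
        Complex.exp ((-(c * x) : ℝ) * Complex.I) * clampSin l x)
      = ∫ x in (-1:ℝ)..1, Complex.exp ((-(c * x) : ℝ) * Complex.I) * clampSin l x := by
    rw [← intervalIntegral.integral_add_adjacent_intervals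
        (a := -alpha) (b := (-1:ℝ)) (c := alpha) (icont.intervalIntegrable _ _)
        (icont.intervalIntegrable _ _),
      ← intervalIntegral.integral_add_adjacent_intervals
        (a := -1) (b := (1:ℝ)) (c := alpha) (icont.intervalIntegrable _ _)
        (icont.intervalIntegrable _ _), split1, split2]
    ring
  rw [hsplit, hmid, key_int b c hbc1 hbc2]
  -- now a scalar identity
  have hcosl : Real.cos ((l:ℝ) * π) = (-1:ℝ)^l := by
    simpa using Real.cos_nat_mul_pi_sub 0 l
  have hsadd : Real.sin (b + c) = (-1:ℝ)^l * Real.sin c := by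
    rw [hb, Real.sin_add, Real.sin_nat_mul_pi, hcosl]
    ring
  have hssub : Real.sin (b - c) = -((-1:ℝ)^l * Real.sin c) := by
    rw [hb, Real.sin_nat_mul_pi_sub]
  rw [hsadd, hssub, Complex.real_smul]
  have rearr : ∀ (r s t : ℝ), s = r * t → ((r:ℝ):ℂ) * (Complex.I * ((t:ℝ):ℂ))
      = Complex.I * ((s:ℝ):ℂ) := by
    intro r s t h; rw [h]; push_cast; ring
  apply rearr
  have h1 : b + c ≠ 0 := hbc2
  have h2 : b - c ≠ 0 := hbc1
  have hd : alpha ^ 2 * (l:ℝ) ^ 2 - (n:ℝ) ^ 2 ≠ 0 := denom_ne hl halpha hirr n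
  have hπ' : π ≠ 0 := ne_of_gt hπ
  have hα' : alpha ≠ 0 := ne_of_gt hα
  rw [hb, hc] at h1 h2 ⊢
  have h1' : (l:ℝ) * alpha * π + (n:ℝ) * π ≠ 0 := by
    intro h
    apply h1
    field_simp; ring
    linear_combination h
  have h2' : (l:ℝ) * alpha * π - (n:ℝ) * π ≠ 0 := by
    intro h
    apply h2
    field_simp; ring
    linear_combination h
  have e1 : (l:ℝ) * π + (n:ℝ) * π / alpha = ((l:ℝ) * alpha * π + (n:ℝ) * π) / alpha := by
    field_simp
  have e2 : (l:ℝ) * π - (n:ℝ) * π / alpha = ((l:ℝ) * alpha * π - (n:ℝ) * π) / alpha := by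
    field_simp
  rw [e1, e2, div_div_eq_mul_div, div_div_eq_mul_div]
  field_simp [h1', h2']
  have hp : (l:ℝ)*alpha + n ≠ 0 := fun h => h1' (by linear_combination π * h)
  have hm : (l:ℝ)*alpha - n ≠ 0 := fun h => h2' (by linear_combination π * h)
  rw [show (l:ℝ)^2*alpha^2 - (n:ℝ)^2 = ((l:ℝ)*alpha+n)*((l:ℝ)*alpha-n) by ring]
  field_simp
  ring


private lemma liftIco_cont (hl : 1 ≤ l) (halpha : 1 < alpha) :
    haveI : Fact (0 < 2 * alpha) := ⟨by linarith⟩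
    Continuous (AddCircle.liftIco (2*alpha) (-alpha) (clampSin l)) := by
  haveI : Fact (0 < 2 * alpha) := ⟨by linarith⟩
  apply AddCircle.liftIco_continuous
  · rw [clampSin_eq_zero_left (by linarith : -alpha ≤ -1),
      clampSin_eq_zero_right (by linarith : (1:ℝ) ≤ -alpha + 2*alpha)]
  · exact (clampSin_cont l).continuousOn

private lemma sin_sq_integral (hl : 1 ≤ l) :
    ∫ x in (-1:ℝ)..1, Real.sin ((l:ℝ)*π*x)^2 = 1 := by
  have hl0 : (0:ℝ) < (l:ℝ) := by exact_mod_cast Nat.pos_of_ne_zero (by omega)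
  have hc : ((l:ℝ)*π) ≠ 0 := by positivity
  rw [intervalIntegral.integral_comp_mul_left (fun y => Real.sin y ^ 2) hc,
    mul_neg_one, mul_one, integral_sin_sq, Real.sin_neg, Real.sin_nat_mul_pi]
  simp only [neg_zero, zero_mul, mul_zero, sub_zero, zero_sub, neg_neg, zero_add]
  rw [smul_eq_mul]; field_simp; norm_num

private lemma norm_sq_integral (hl : 1 ≤ l) (halpha : 1 < alpha) :
    haveI : Fact (0 < 2 * alpha) := ⟨by linarith⟩
    ∫ t : AddCircle (2*alpha),
        ‖AddCircle.liftIco (2*alpha) (-alpha) (clampSin l) t‖^2 ∂AddCircle.haarAddCircle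
      = 1/(2*alpha) := by
  haveI : Fact (0 < 2 * alpha) := ⟨by linarith⟩
  set f : AddCircle (2*alpha) → ℝ :=
    fun t => ‖AddCircle.liftIco (2*alpha) (-alpha) (clampSin l) t‖^2 with hf
  have hvol : ∫ t, f t ∂(volume) = (2*alpha) * ∫ t, f t ∂AddCircle.haarAddCircle := by
    rw [AddCircle.volume_eq_smul_haarAddCircle, MeasureTheory.integral_smul_measure,
      ENNReal.toReal_ofReal (by linarith : (0:ℝ) ≤ 2*alpha), smul_eq_mul]
  have hpre := AddCircle.intervalIntegral_preimage (T := 2*alpha) (-alpha) f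
  -- compute the interval integral
  have hIval : (∫ x in (-alpha)..(-alpha + 2*alpha), f (x : AddCircle (2*alpha))) = 1 := by
    rw [show -alpha + 2*alpha = alpha by ring]
    have hcong : (∫ x in (-alpha)..alpha, f (x : AddCircle (2*alpha)))
        = ∫ x in (-alpha)..alpha, ‖clampSin l x‖^2 := by
      refine intervalIntegral.integral_congr_ae ?_
      have hne : ∀ᵐ x : ℝ, x ≠ alpha := by
        refine (MeasureTheory.ae_iff).mpr ?_
        simpa using Real.volume_singleton
      filter_upwards [hne] with x hx hmem
      rw [uIoc_of_le (by linarith : -alpha ≤ alpha)] at hmem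
      have hxmem : x ∈ Ico (-alpha) (-alpha + 2*alpha) := by
        constructor
        · exact le_of_lt hmem.1
        · rw [show -alpha + 2*alpha = alpha by ring]
          exact lt_of_le_of_ne hmem.2 hx
      rw [hf]
      simp only
      rw [AddCircle.liftIco_coe_apply hxmem]
    rw [hcong]
    have icont : Continuous (fun x : ℝ => ‖clampSin l x‖^2) := by
      apply Continuous.pow
      exact (clampSin_cont l).norm
    have split1 : (∫ x in (-alpha)..(-1:ℝ), ‖clampSin l x‖^2) = 0 := by
      rw [intervalIntegral.integral_congr (g := fun _ => (0:ℝ)) ?_,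
        intervalIntegral.integral_zero]
      intro x hx
      rw [uIcc_of_le (by linarith : -alpha ≤ -1)] at hx
      show ‖clampSin l x‖^2 = 0
      rw [clampSin_eq_zero_left hx.2]
      simp
    have split2 : (∫ x in (1:ℝ)..alpha, ‖clampSin l x‖^2) = 0 := by
      rw [intervalIntegral.integral_congr (g := fun _ => (0:ℝ)) ?_,
        intervalIntegral.integral_zero]
      intro x hx
      rw [uIcc_of_le (by linarith : (1:ℝ) ≤ alpha)] at hx
      show ‖clampSin l x‖^2 = 0
      rw [clampSin_eq_zero_right hx.1]
      simp
    rw [← intervalIntegral.integral_add_adjacent_intervals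
        (a := -alpha) (b := (-1:ℝ)) (c := alpha) (icont.intervalIntegrable _ _)
        (icont.intervalIntegrable _ _),
      ← intervalIntegral.integral_add_adjacent_intervals
        (a := -1) (b := (1:ℝ)) (c := alpha) (icont.intervalIntegrable _ _)
        (icont.intervalIntegrable _ _), split1, split2]
    have hmid : (∫ x in (-1:ℝ)..1, ‖clampSin l x‖^2)
        = ∫ x in (-1:ℝ)..1, Real.sin ((l:ℝ)*π*x)^2 := by
      refine intervalIntegral.integral_congr fun x hx => ?_
      rw [uIcc_of_le (by norm_num : (-1:ℝ) ≤ 1)] at hx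
      show ‖clampSin l x‖^2 = _
      rw [clampSin_eq_of_mem hx.1 hx.2, Complex.norm_real, Real.norm_eq_abs, sq_abs]
    rw [hmid, sin_sq_integral hl]
    ring
  rw [hpre, hvol] at hIval
  have hα : (0:ℝ) < alpha := by linarith
  field_simp at hIval ⊢
  linarith

private lemma parseval_clamp (hl : 1 ≤ l) (halpha : 1 < alpha) :
    haveI : Fact (0 < 2 * alpha) := ⟨by linarith⟩
    ∑' n : ℤ, ‖fourierCoeff (AddCircle.liftIco (2*alpha) (-alpha) (clampSin l)) n‖^2
      = 1/(2*alpha) := by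
  haveI : Fact (0 < 2 * alpha) := ⟨by linarith⟩
  set F : C(AddCircle (2*alpha), ℂ) :=
    ⟨AddCircle.liftIco (2*alpha) (-alpha) (clampSin l), liftIco_cont hl halpha⟩ with hFdef
  have h1 := tsum_sq_fourierCoeff
    (ContinuousMap.toLp (E := ℂ) 2 AddCircle.haarAddCircle ℂ F)
  have h2 : ∀ n : ℤ, fourierCoeff
      ((ContinuousMap.toLp (E := ℂ) 2 AddCircle.haarAddCircle ℂ F : Lp ℂ 2 _) : AddCircle (2*alpha) → ℂ) n
      = fourierCoeff (⇑F) n := fun n => fourierCoeff_toLp F n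
  have h3 : (∫ t : AddCircle (2*alpha),
        ‖((ContinuousMap.toLp (E := ℂ) 2 AddCircle.haarAddCircle ℂ F : Lp ℂ 2 _) :
          AddCircle (2*alpha) → ℂ) t‖^2 ∂AddCircle.haarAddCircle)
      = ∫ t : AddCircle (2*alpha), ‖F t‖^2 ∂AddCircle.haarAddCircle := by
    refine integral_congr_ae ?_
    filter_upwards [ContinuousMap.coeFn_toLp (p := 2) (μ := AddCircle.haarAddCircle) (𝕜 := ℂ) F]
      with t ht
    rw [ht]
  simp_rw [h2] at h1
  rw [h3] at h1
  have h4 : (∫ t : AddCircle (2*alpha), ‖F t‖^2 ∂AddCircle.haarAddCircle) = 1/(2*alpha) :=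
    norm_sq_integral hl halpha
  rw [h4] at h1
  exact h1

end Main

end SuddenExpansionAux

theorem sudden_expansion_unitarity (l : ℕ) (hl : 1 ≤ l) (alpha : ℝ)
    (halpha : 1 < alpha) (hirr : Irrational alpha) :
    ∑' k : ℕ,
        (2 * l * alpha ^ ((3:ℝ)/2) * (-1 : ℝ) ^ l /
          (Real.pi * (((k + 1 : ℕ) : ℝ)^2 - alpha^2 * (l:ℝ)^2)) *
          Real.sin ((k + 1 : ℕ) * Real.pi / alpha)) ^ 2 = 1 := by
  haveI : Fact (0 < 2 * alpha) := ⟨by linarith⟩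
  have hα : (0:ℝ) < alpha := by linarith
  have hπ := Real.pi_pos
  set q : ℤ → ℝ := fun n =>
    (-1:ℝ)^l * ((l:ℝ) * alpha * Real.sin (n * π / alpha) / (π * (alpha^2 * l^2 - n^2))) with hq
  have hcoeff : ∀ n : ℤ,
      ‖fourierCoeff (AddCircle.liftIco (2*alpha) (-alpha) (clampSin l)) n‖^2 = q n ^ 2 := by
    intro n
    rw [coeff_formula hl halpha hirr n, norm_mul, Complex.norm_I, one_mul, Complex.norm_real,
      Real.norm_eq_abs, sq_abs, hq]
    simp only
    ring
  have hP : ∑' n : ℤ, q n ^ 2 = 1/(2*alpha) := by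
    have h := parseval_clamp hl halpha
    rw [← h]
    exact tsum_congr fun n => (hcoeff n).symm
  have hsumm : Summable (fun n : ℤ => q n ^ 2) := by
    by_contra h
    rw [tsum_eq_zero_of_not_summable h] at hP
    have h0 : (0:ℝ) < 1/(2*alpha) := by positivity
    linarith
  have hqeven : ∀ n : ℤ, q (-n) ^ 2 = q n ^ 2 := by
    intro n
    rw [hq]
    simp only
    push_cast
    rw [show ((-(n:ℝ)) * π / alpha) = -((n:ℝ) * π / alpha) by ring, Real.sin_neg]
    ring
  have hq0 : q 0 = 0 := by rw [hq]; simp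
  have hsum_nat : Summable (fun n : ℕ => q (n:ℤ) ^ 2) :=
    hsumm.comp_injective Nat.cast_injective
  have hinj : Function.Injective (fun n : ℕ => -((n:ℤ)+1)) := by
    intro a b h
    simp only at h
    omega
  have hsum_neg : Summable (fun n : ℕ => q (-((n:ℤ)+1)) ^ 2) := hsumm.comp_injective hinj
  have hsplit := tsum_nat_add_neg_add_one hsumm
  rw [hsum_nat.tsum_add hsum_neg, hP] at hsplit
  have e1 : ∑' n : ℕ, q (-((n:ℤ)+1)) ^ 2 = ∑' n : ℕ, q ((n:ℤ)+1) ^ 2 :=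
    tsum_congr fun n => hqeven ((n:ℤ)+1)
  have e2 : ∑' n : ℕ, q (n:ℤ) ^ 2 = ∑' n : ℕ, q ((n:ℤ)+1) ^ 2 := by
    rw [hsum_nat.tsum_eq_zero_add]
    rw [show q ((0:ℕ):ℤ) ^ 2 = 0 by rw [show ((0:ℕ):ℤ) = (0:ℤ) by norm_num, hq0]; ring,
      zero_add]
    exact tsum_congr fun n => by push_cast; ring_nf
  rw [e1, e2] at hsplit
  have hS : ∑' n : ℕ, q ((n:ℤ)+1) ^ 2 = 1/(4*alpha) := by
    rw [show (1:ℝ)/(4*alpha) = (1/(2*alpha))/2 by field_simp; ring]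
    linarith
  have hterm : ∀ k : ℕ,
      (2 * l * alpha ^ ((3:ℝ)/2) * (-1 : ℝ) ^ l /
          (Real.pi * (((k + 1 : ℕ) : ℝ)^2 - alpha^2 * (l:ℝ)^2)) *
          Real.sin ((k + 1 : ℕ) * Real.pi / alpha)) ^ 2 = 4 * alpha * q ((k:ℤ)+1) ^ 2 := by
    intro k
    have h32 : (alpha ^ ((3:ℝ)/2))^2 = alpha^3 := by
      rw [← Real.rpow_natCast (alpha ^ ((3:ℝ)/2)) 2, ← Real.rpow_mul (le_of_lt hα)]
      norm_num
    have hsq : ((-1:ℝ)^l)^2 = 1 := by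
      rw [← pow_mul, mul_comm l 2, pow_mul]
      norm_num
    have ha : (2*(l:ℝ)*alpha^((3:ℝ)/2)*(-1:ℝ)^l)^2 = 4*(l:ℝ)^2*alpha^3 := by
      rw [show (2*(l:ℝ)*alpha^((3:ℝ)/2)*(-1:ℝ)^l)^2
          = (alpha^((3:ℝ)/2))^2 * (((-1:ℝ)^l)^2 * (4*(l:ℝ)^2)) by ring, h32, hsq]
      ring
    have hdm : alpha^2*(l:ℝ)^2 - (((k:ℤ)+1 : ℤ):ℝ)^2 ≠ 0 := denom_ne hl halpha hirr ((k:ℤ)+1)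
    push_cast at hdm
    have hdm' : ((k:ℝ)+1)^2 - alpha^2*(l:ℝ)^2 ≠ 0 := fun h => hdm (by linarith)
    have hd1 : π * (((k:ℝ)+1)^2 - alpha^2*(l:ℝ)^2) ≠ 0 := mul_ne_zero (ne_of_gt hπ) hdm'
    have hd2 : π * (alpha^2*(l:ℝ)^2 - ((k:ℝ)+1)^2) ≠ 0 := mul_ne_zero (ne_of_gt hπ) hdm
    rw [hq]
    simp only
    push_cast
    rw [mul_pow, div_pow, ha, mul_pow, mul_pow, hsq, one_mul, div_pow]
    field_simp
    ring
  calc ∑' k : ℕ, (2 * l * alpha ^ ((3:ℝ)/2) * (-1 : ℝ) ^ l /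
          (Real.pi * (((k + 1 : ℕ) : ℝ)^2 - alpha^2 * (l:ℝ)^2)) *
          Real.sin ((k + 1 : ℕ) * Real.pi / alpha)) ^ 2
      = ∑' k : ℕ, 4 * alpha * q ((k:ℤ)+1) ^ 2 := tsum_congr hterm
    _ = 4 * alpha * ∑' k : ℕ, q ((k:ℤ)+1) ^ 2 := tsum_mul_left
    _ = 1 := by rw [hS]; field_simp
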